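/- Suppose (a, b, c) is a triple of six times continuously differentiable functions from [0,L] to ℝ satisfying the coupled system: a' + a''' + φ1·φ1' − c1·φ2 + q·b = 0 on [0,L] with a(0) = a(L) = 0 and a'(L) = 0; b' + b''' + φ1·φ2' + φ1'·φ2 + c1·φ1 − √3·c1·φ2 − 2q·a + 2q·c = 0 on [0,L] with b(0) = b(L) = 0 and b'(L) = 0; and c' + c''' + φ2·φ2' + √3·c1·φ1 − q·b = 0 on [0,L] with c(0) = c(L) = 0 and c'(L) = 0. Define g₋ := φ1·φ1' − φ2·φ2' − √3·c1·φ1 − c1·φ2, g := φ1·φ2' + φ1'·φ2 + c1·φ1 − √3·c1·φ2, and f₋ := a − c. Then b = −(1/(2q))·(f₋' + f₋''' + g₋) on [0,L], and f₋ satisfies the sixth-order boundary value problem f₋⁽⁶⁾ + 2f₋⁽⁴⁾ + f₋'' + 4q²·f₋ + g₋' + g₋''' − 2q·g = 0 on [0,L], with f₋(0) = f₋(L) = f₋'(L) = f₋'''(L) = 0, f₋'(0) + f₋'''(0) = 0, and f₋''(L) + f₋⁽⁴⁾(L) = 0. -/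

import Mathlib

noncomputable def L : ℝ := 2 * Real.pi * Real.sqrt (7 / 3)

noncomputable def q : ℝ := 20 / (21 * Real.sqrt 21)

noncomputable def Θ : ℝ := (1 / Real.sqrt (14 * Real.pi)) * (3 / 7 : ℝ) ^ ((1 : ℝ) / 4)

noncomputable def φ1 (x : ℝ) : ℝ :=
  Θ * (Real.cos (5 * x / Real.sqrt 21) - 3 * Real.cos (x / Real.sqrt 21)
      + 2 * Real.cos (4 * x / Real.sqrt 21))

noncomputable def φ2 (x : ℝ) : ℝ :=
  Θ * (-Real.sin (5 * x / Real.sqrt 21) - 3 * Real.sin (x / Real.sqrt 21)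
      + 2 * Real.sin (4 * x / Real.sqrt 21))


noncomputable def c1 : ℝ :=
  (177147 / (392392 * Real.pi)) * Real.sqrt (1 / (2 * Real.pi)) * (3 / 7 : ℝ) ^ ((1 : ℝ) / 4)

/-- g₋ := φ1·φ1' − φ2·φ2' − √3·c1·φ1 − c1·φ2. -/
noncomputable def gminus (x : ℝ) : ℝ :=
  φ1 x * deriv φ1 x - φ2 x * deriv φ2 x - Real.sqrt 3 * c1 * φ1 x - c1 * φ2 x

/-- g := φ1·φ2' + φ1'·φ2 + c1·φ1 − √3·c1·φ2. -/
noncomputable def gfun (x : ℝ) : ℝ :=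
  φ1 x * deriv φ2 x + deriv φ1 x * φ2 x + c1 * φ1 x - Real.sqrt 3 * c1 * φ2 x


/- ### Auxiliary definitions and lemmas -/

noncomputable def φ1d (x : ℝ) : ℝ :=
  Θ * (-Real.sin (5 * x / Real.sqrt 21) * (5 / Real.sqrt 21)
      - 3 * (-Real.sin (x / Real.sqrt 21) * (1 / Real.sqrt 21))
      + 2 * (-Real.sin (4 * x / Real.sqrt 21) * (4 / Real.sqrt 21)))

noncomputable def φ2d (x : ℝ) : ℝ :=
  Θ * (-(Real.cos (5 * x / Real.sqrt 21) * (5 / Real.sqrt 21))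
      - 3 * (Real.cos (x / Real.sqrt 21) * (1 / Real.sqrt 21))
      + 2 * (Real.cos (4 * x / Real.sqrt 21) * (4 / Real.sqrt 21)))

lemma hasDerivAt_lin (k x : ℝ) :
    HasDerivAt (fun y : ℝ => k * y / Real.sqrt 21) (k / Real.sqrt 21) x := by
  simpa using ((hasDerivAt_id x).const_mul k).div_const (Real.sqrt 21)

lemma hasDerivAt_lin1 (x : ℝ) :
    HasDerivAt (fun y : ℝ => y / Real.sqrt 21) (1 / Real.sqrt 21) x := by
  simpa using (hasDerivAt_id x).div_const (Real.sqrt 21)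

lemma hasDerivAt_φ1 (x : ℝ) : HasDerivAt φ1 (φ1d x) x := by
  have h5 := (hasDerivAt_lin 5 x).cos
  have h1 := (hasDerivAt_lin1 x).cos
  have h4 := (hasDerivAt_lin 4 x).cos
  have h := ((h5.sub (h1.const_mul 3)).add (h4.const_mul 2)).const_mul Θ
  unfold φ1 φ1d
  convert h using 2
  all_goals rfl

lemma hasDerivAt_φ2 (x : ℝ) : HasDerivAt φ2 (φ2d x) x := by
  have h5 := ((hasDerivAt_lin 5 x).sin).neg
  have h1 := (hasDerivAt_lin1 x).sin
  have h4 := (hasDerivAt_lin 4 x).sin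
  have h := ((h5.sub (h1.const_mul 3)).add (h4.const_mul 2)).const_mul Θ
  unfold φ2 φ2d
  convert h using 2
  all_goals rfl

lemma deriv_φ1 : deriv φ1 = φ1d := funext fun x => (hasDerivAt_φ1 x).deriv

lemma deriv_φ2 : deriv φ2 = φ2d := funext fun x => (hasDerivAt_φ2 x).deriv

lemma contDiff_φ1 : ContDiff ℝ (↑(⊤:ℕ∞)) φ1 := by
  unfold φ1
  exact contDiff_const.mul
    (((Real.contDiff_cos.comp ((contDiff_const.mul contDiff_id).div_const _)).sub
        (contDiff_const.mul (Real.contDiff_cos.comp (contDiff_id.div_const _)))).add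
      (contDiff_const.mul (Real.contDiff_cos.comp ((contDiff_const.mul contDiff_id).div_const _))))

lemma contDiff_φ2 : ContDiff ℝ (↑(⊤:ℕ∞)) φ2 := by
  unfold φ2
  exact contDiff_const.mul
    ((((Real.contDiff_sin.comp ((contDiff_const.mul contDiff_id).div_const _)).neg).sub
        (contDiff_const.mul (Real.contDiff_sin.comp (contDiff_id.div_const _)))).add
      (contDiff_const.mul (Real.contDiff_sin.comp ((contDiff_const.mul contDiff_id).div_const _))))

lemma contDiff_φ1d : ContDiff ℝ (↑(⊤:ℕ∞)) φ1d := by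
  unfold φ1d
  exact contDiff_const.mul
    ((((Real.contDiff_sin.comp ((contDiff_const.mul contDiff_id).div_const _)).neg.mul
          contDiff_const).sub
        (contDiff_const.mul ((Real.contDiff_sin.comp (contDiff_id.div_const _)).neg.mul
          contDiff_const))).add
      (contDiff_const.mul ((Real.contDiff_sin.comp
        ((contDiff_const.mul contDiff_id).div_const _)).neg.mul contDiff_const)))

lemma contDiff_φ2d : ContDiff ℝ (↑(⊤:ℕ∞)) φ2d := by
  unfold φ2d
  exact contDiff_const.mul
    ((((Real.contDiff_cos.comp ((contDiff_const.mul contDiff_id).div_const _)).mul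
          contDiff_const).neg.sub
        (contDiff_const.mul ((Real.contDiff_cos.comp (contDiff_id.div_const _)).mul
          contDiff_const))).add
      (contDiff_const.mul ((Real.contDiff_cos.comp
        ((contDiff_const.mul contDiff_id).div_const _)).mul contDiff_const)))

lemma gminus_eq : gminus = fun x =>
    φ1 x * φ1d x - φ2 x * φ2d x - Real.sqrt 3 * c1 * φ1 x - c1 * φ2 x := by
  funext x; rw [gminus, deriv_φ1, deriv_φ2]

lemma contDiff_gminus : ContDiff ℝ (↑(⊤:ℕ∞)) gminus := by
  rw [gminus_eq]
  exact (((contDiff_φ1.mul contDiff_φ1d).sub (contDiff_φ2.mul contDiff_φ2d)).sub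
      (contDiff_const.mul contDiff_φ1)).sub (contDiff_const.mul contDiff_φ2)

lemma L_pos : 0 < L := by unfold L; positivity

lemma q_pos : 0 < q := by unfold q; positivity

open Real in
lemma cos_2pi3 : Real.cos (2*Real.pi/3) = -(1/2) := by
  rw [show (2*π/3 : ℝ) = π - π/3 by ring, Real.cos_pi_sub, Real.cos_pi_div_three]
open Real in
lemma sin_2pi3 : Real.sin (2*Real.pi/3) = Real.sqrt 3/2 := by
  rw [show (2*π/3 : ℝ) = π - π/3 by ring, Real.sin_pi_sub, Real.sin_pi_div_three]
open Real in
lemma cos_4pi3 : Real.cos (4*Real.pi/3) = -(1/2) := by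
  rw [show (4*π/3 : ℝ) = -(2*π/3) + 2*π by ring, Real.cos_add_two_pi, Real.cos_neg, cos_2pi3]
open Real in
lemma sin_4pi3 : Real.sin (4*Real.pi/3) = -(Real.sqrt 3/2) := by
  rw [show (4*π/3 : ℝ) = -(2*π/3) + 2*π by ring, Real.sin_add_two_pi, Real.sin_neg, sin_2pi3]
open Real in
lemma cos_8pi3 : Real.cos (8*Real.pi/3) = -(1/2) := by
  rw [show (8*π/3 : ℝ) = 2*π/3 + 2*π by ring, Real.cos_add_two_pi, cos_2pi3]
open Real in
lemma sin_8pi3 : Real.sin (8*Real.pi/3) = Real.sqrt 3/2 := by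
  rw [show (8*π/3 : ℝ) = 2*π/3 + 2*π by ring, Real.sin_add_two_pi, sin_2pi3]
open Real in
lemma cos_10pi3 : Real.cos (10*Real.pi/3) = -(1/2) := by
  rw [show (10*π/3 : ℝ) = 4*π/3 + 2*π by ring, Real.cos_add_two_pi, cos_4pi3]
open Real in
lemma sin_10pi3 : Real.sin (10*Real.pi/3) = -(Real.sqrt 3/2) := by
  rw [show (10*π/3 : ℝ) = 4*π/3 + 2*π by ring, Real.sin_add_two_pi, sin_4pi3]

lemma L_div : L / Real.sqrt 21 = 2*Real.pi/3 := by
  have h : Real.sqrt (7/3) / Real.sqrt 21 = 1/3 := by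
    rw [← Real.sqrt_div (by norm_num : (0:ℝ) ≤ 7/3)]
    rw [show (7/3/21 : ℝ) = (1/3)^2 by norm_num, Real.sqrt_sq (by norm_num)]
  rw [L, mul_div_assoc, h]; ring

lemma arg5 : 5 * L / Real.sqrt 21 = 10*Real.pi/3 := by
  rw [mul_div_assoc, L_div]; ring

lemma arg4 : 4 * L / Real.sqrt 21 = 8*Real.pi/3 := by
  rw [mul_div_assoc, L_div]; ring

lemma φ1_zero : φ1 0 = 0 := by norm_num [φ1]

lemma φ2_zero : φ2 0 = 0 := by norm_num [φ2]

lemma φ1_L : φ1 L = 0 := by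
  unfold φ1; rw [arg5, L_div, arg4, cos_10pi3, cos_2pi3, cos_8pi3]; ring

lemma φ2_L : φ2 L = 0 := by
  unfold φ2; rw [arg5, L_div, arg4, sin_10pi3, sin_2pi3, sin_8pi3]; ring

lemma φ1d_L : φ1d L = 0 := by
  unfold φ1d; rw [arg5, L_div, arg4, sin_10pi3, sin_2pi3, sin_8pi3]; ring

lemma φ2d_L : φ2d L = 0 := by
  unfold φ2d; rw [arg5, L_div, arg4, cos_10pi3, cos_2pi3, cos_8pi3]; ring

lemma gminus_zero : gminus 0 = 0 := by
  rw [gminus_eq]; simp [φ1_zero, φ2_zero]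

lemma gminus_L : gminus L = 0 := by
  rw [gminus_eq]; simp [φ1_L, φ2_L]

lemma deriv_gminus_L : deriv gminus L = 0 := by
  have h1 := (contDiff_φ1d.differentiable (by simp) L).hasDerivAt
  have h2 := (contDiff_φ2d.differentiable (by simp) L).hasDerivAt
  have hg : HasDerivAt gminus (φ1d L * φ1d L + φ1 L * deriv φ1d L
      - (φ2d L * φ2d L + φ2 L * deriv φ2d L) - Real.sqrt 3 * c1 * φ1d L - c1 * φ2d L) L := by
    rw [gminus_eq]
    exact ((((hasDerivAt_φ1 L).mul h1).sub ((hasDerivAt_φ2 L).mul h2)).sub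
        ((hasDerivAt_φ1 L).const_mul (Real.sqrt 3 * c1))).sub ((hasDerivAt_φ2 L).const_mul c1)
  rw [hg.deriv, φ1_L, φ2_L, φ1d_L, φ2d_L]; ring

lemma iteratedDeriv_three (x : ℝ) :
    iteratedDeriv 3 gminus x = deriv (deriv (deriv gminus)) x := by
  rw [show (3:ℕ) = 2+1 from rfl, iteratedDeriv_succ,
    show (2:ℕ) = 1+1 from rfl, iteratedDeriv_succ, iteratedDeriv_one]

lemma chain_step {s : Set ℝ} (hs : UniqueDiffOn ℝ s) {f b w : ℝ → ℝ}
    (hf : ContDiffOn ℝ 6 f s) (hb : ContDiffOn ℝ 6 b s)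
    (hw : ContDiff ℝ (↑(⊤:ℕ∞)) w) (j : ℕ) (hj : j < 3) {κ : ℝ}
    (H : ∀ y ∈ s, iteratedDerivWithin (j+1) f s y + iteratedDerivWithin (j+3) f s y
      + w y + κ * iteratedDerivWithin j b s y = 0) :
    ∀ x ∈ s, iteratedDerivWithin (j+2) f s x + iteratedDerivWithin (j+4) f s x
      + deriv w x + κ * iteratedDerivWithin (j+1) b s x = 0 := by
  intro x hx
  have hux : UniqueDiffWithinAt ℝ s x := hs x hx
  have H1 : HasDerivWithinAt (iteratedDerivWithin (j+1) f s)
      (iteratedDerivWithin (j+2) f s x) s x := by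
    have h := ((hf.differentiableOn_iteratedDerivWithin
        (by exact_mod_cast (by omega : j+1 < 6)) hs) x hx).hasDerivWithinAt
    rwa [show j+2 = (j+1)+1 from rfl, iteratedDerivWithin_succ (n := j+1)]
  have H3 : HasDerivWithinAt (iteratedDerivWithin (j+3) f s)
      (iteratedDerivWithin (j+4) f s x) s x := by
    have h := ((hf.differentiableOn_iteratedDerivWithin
        (by exact_mod_cast (by omega : j+3 < 6)) hs) x hx).hasDerivWithinAt
    rwa [show j+4 = (j+3)+1 from rfl, iteratedDerivWithin_succ (n := j+3)]
  have Hb : HasDerivWithinAt (iteratedDerivWithin j b s)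
      (iteratedDerivWithin (j+1) b s x) s x := by
    have h := ((hb.differentiableOn_iteratedDerivWithin
        (by exact_mod_cast (by omega : j < 6)) hs) x hx).hasDerivWithinAt
    rwa [iteratedDerivWithin_succ (n := j)]
  have Hw : HasDerivWithinAt w (deriv w x) s x :=
    ((hw.differentiable (by simp) x).hasDerivAt).hasDerivWithinAt
  have Htot : HasDerivWithinAt
      (fun y => iteratedDerivWithin (j+1) f s y + iteratedDerivWithin (j+3) f s y
        + w y + κ * iteratedDerivWithin j b s y)
      (iteratedDerivWithin (j+2) f s x + iteratedDerivWithin (j+4) f s x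
        + deriv w x + κ * iteratedDerivWithin (j+1) b s x) s x :=
    ((H1.add H3).add Hw).add (Hb.const_mul κ)
  have hzero : derivWithin
      (fun y => iteratedDerivWithin (j+1) f s y + iteratedDerivWithin (j+3) f s y
        + w y + κ * iteratedDerivWithin j b s y) s x = 0 := by
    have heq : Set.EqOn (fun y => iteratedDerivWithin (j+1) f s y
        + iteratedDerivWithin (j+3) f s y + w y + κ * iteratedDerivWithin j b s y)
        (fun _ => (0:ℝ)) s := fun y hy => H y hy
    rw [derivWithin_congr heq (H x hx)]
    simp
  have hval := Htot.derivWithin hux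
  rw [hzero] at hval
  linarith [hval]

/-- any C⁶ solution (a,b,c) of the coupled system yields
b = −(1/(2q))·(f₋' + f₋''' + g₋) with f₋ := a − c, and f₋ solves the stated
sixth-order boundary value problem. -/
theorem stmt_15 (a b c : ℝ → ℝ)
    (ha : ContDiffOn ℝ 6 a (Set.Icc 0 L))
    (hb : ContDiffOn ℝ 6 b (Set.Icc 0 L))
    (hc : ContDiffOn ℝ 6 c (Set.Icc 0 L))
    (hodea : ∀ x ∈ Set.Icc (0 : ℝ) L,
      iteratedDerivWithin 1 a (Set.Icc 0 L) x + iteratedDerivWithin 3 a (Set.Icc 0 L) x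
        + φ1 x * deriv φ1 x - c1 * φ2 x + q * b x = 0)
    (ha0 : a 0 = 0) (haL : a L = 0) (haL' : iteratedDerivWithin 1 a (Set.Icc 0 L) L = 0)
    (hodeb : ∀ x ∈ Set.Icc (0 : ℝ) L,
      iteratedDerivWithin 1 b (Set.Icc 0 L) x + iteratedDerivWithin 3 b (Set.Icc 0 L) x
        + φ1 x * deriv φ2 x + deriv φ1 x * φ2 x + c1 * φ1 x - Real.sqrt 3 * c1 * φ2 x
        - 2 * q * a x + 2 * q * c x = 0)
    (hb0 : b 0 = 0) (hbL : b L = 0) (hbL' : iteratedDerivWithin 1 b (Set.Icc 0 L) L = 0)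
    (hodec : ∀ x ∈ Set.Icc (0 : ℝ) L,
      iteratedDerivWithin 1 c (Set.Icc 0 L) x + iteratedDerivWithin 3 c (Set.Icc 0 L) x
        + φ2 x * deriv φ2 x + Real.sqrt 3 * c1 * φ1 x - q * b x = 0)
    (hc0 : c 0 = 0) (hcL : c L = 0) (hcL' : iteratedDerivWithin 1 c (Set.Icc 0 L) L = 0) :
    (∀ x ∈ Set.Icc (0 : ℝ) L,
      b x = -(1 / (2 * q)) *
        (iteratedDerivWithin 1 (fun ξ => a ξ - c ξ) (Set.Icc 0 L) x
          + iteratedDerivWithin 3 (fun ξ => a ξ - c ξ) (Set.Icc 0 L) x + gminus x)) ∧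
    (∀ x ∈ Set.Icc (0 : ℝ) L,
      iteratedDerivWithin 6 (fun ξ => a ξ - c ξ) (Set.Icc 0 L) x
        + 2 * iteratedDerivWithin 4 (fun ξ => a ξ - c ξ) (Set.Icc 0 L) x
        + iteratedDerivWithin 2 (fun ξ => a ξ - c ξ) (Set.Icc 0 L) x
        + 4 * q ^ 2 * (a x - c x)
        + deriv gminus x + iteratedDeriv 3 gminus x - 2 * q * gfun x = 0) ∧
    a 0 - c 0 = 0 ∧ a L - c L = 0 ∧
    iteratedDerivWithin 1 (fun ξ => a ξ - c ξ) (Set.Icc 0 L) L = 0 ∧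
    iteratedDerivWithin 3 (fun ξ => a ξ - c ξ) (Set.Icc 0 L) L = 0 ∧
    iteratedDerivWithin 1 (fun ξ => a ξ - c ξ) (Set.Icc 0 L) 0
      + iteratedDerivWithin 3 (fun ξ => a ξ - c ξ) (Set.Icc 0 L) 0 = 0 ∧
    iteratedDerivWithin 2 (fun ξ => a ξ - c ξ) (Set.Icc 0 L) L
      + iteratedDerivWithin 4 (fun ξ => a ξ - c ξ) (Set.Icc 0 L) L = 0 := by

  have hL : 0 < L := L_pos
  have hs : UniqueDiffOn ℝ (Set.Icc (0:ℝ) L) := uniqueDiffOn_Icc hL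
  have hq : q ≠ 0 := ne_of_gt q_pos
  have mem0 : (0:ℝ) ∈ Set.Icc (0:ℝ) L := ⟨le_refl 0, le_of_lt hL⟩
  have memL : L ∈ Set.Icc (0:ℝ) L := ⟨le_of_lt hL, le_refl L⟩
  have hf : ContDiffOn ℝ 6 (fun ξ => a ξ - c ξ) (Set.Icc 0 L) := ha.sub hc
  have hsub : ∀ (k:ℕ), ((k:ℕ) : WithTop ℕ∞) ≤ 6 → ∀ x ∈ Set.Icc (0:ℝ) L,
      iteratedDerivWithin k (fun ξ => a ξ - c ξ) (Set.Icc 0 L) x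
        = iteratedDerivWithin k a (Set.Icc 0 L) x - iteratedDerivWithin k c (Set.Icc 0 L) x := by
    intro k hk x hx
    exact iteratedDerivWithin_sub hx hs (ha.of_le hk x hx) (hc.of_le hk x hx)
  have B : ∀ x ∈ Set.Icc (0:ℝ) L,
      iteratedDerivWithin 1 (fun ξ => a ξ - c ξ) (Set.Icc 0 L) x
        + iteratedDerivWithin 3 (fun ξ => a ξ - c ξ) (Set.Icc 0 L) x
        + gminus x + 2*q * b x = 0 := by
    intro x hx
    have h1 := hsub 1 (by norm_num) x hx
    have h3 := hsub 3 (by norm_num) x hx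
    have ea := hodea x hx
    have ec := hodec x hx
    simp only [gminus]
    rw [h1, h3]
    linear_combination ea - ec
  have hwg1 : ContDiff ℝ (↑(⊤:ℕ∞)) (deriv gminus) := (contDiff_infty_iff_deriv.mp contDiff_gminus).2
  have hwg2 : ContDiff ℝ (↑(⊤:ℕ∞)) (deriv (deriv gminus)) := (contDiff_infty_iff_deriv.mp hwg1).2
  have B0 : ∀ y ∈ Set.Icc (0:ℝ) L,
      iteratedDerivWithin (0+1) (fun ξ => a ξ - c ξ) (Set.Icc 0 L) y
        + iteratedDerivWithin (0+3) (fun ξ => a ξ - c ξ) (Set.Icc 0 L) y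
        + gminus y + 2*q * iteratedDerivWithin 0 b (Set.Icc 0 L) y = 0 :=
    fun y hy => by simpa using B y hy
  have B1 := chain_step hs hf hb contDiff_gminus 0 (by norm_num) B0
  have B1' : ∀ x ∈ Set.Icc (0:ℝ) L,
      iteratedDerivWithin 2 (fun ξ => a ξ - c ξ) (Set.Icc 0 L) x
        + iteratedDerivWithin 4 (fun ξ => a ξ - c ξ) (Set.Icc 0 L) x
        + deriv gminus x + 2*q * iteratedDerivWithin 1 b (Set.Icc 0 L) x = 0 :=
    fun x hx => by simpa using B1 x hx
  have B1c : ∀ y ∈ Set.Icc (0:ℝ) L,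
      iteratedDerivWithin (1+1) (fun ξ => a ξ - c ξ) (Set.Icc 0 L) y
        + iteratedDerivWithin (1+3) (fun ξ => a ξ - c ξ) (Set.Icc 0 L) y
        + deriv gminus y + 2*q * iteratedDerivWithin 1 b (Set.Icc 0 L) y = 0 :=
    fun y hy => by simpa using B1' y hy
  have B2 := chain_step hs hf hb hwg1 1 (by norm_num) B1c
  have B2c : ∀ y ∈ Set.Icc (0:ℝ) L,
      iteratedDerivWithin (2+1) (fun ξ => a ξ - c ξ) (Set.Icc 0 L) y
        + iteratedDerivWithin (2+3) (fun ξ => a ξ - c ξ) (Set.Icc 0 L) y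
        + deriv (deriv gminus) y + 2*q * iteratedDerivWithin 2 b (Set.Icc 0 L) y = 0 :=
    fun y hy => by simpa using B2 y hy
  have B3 := chain_step hs hf hb hwg2 2 (by norm_num) B2c
  have B3' : ∀ x ∈ Set.Icc (0:ℝ) L,
      iteratedDerivWithin 4 (fun ξ => a ξ - c ξ) (Set.Icc 0 L) x
        + iteratedDerivWithin 6 (fun ξ => a ξ - c ξ) (Set.Icc 0 L) x
        + deriv (deriv (deriv gminus)) x + 2*q * iteratedDerivWithin 3 b (Set.Icc 0 L) x = 0 :=
    fun x hx => by simpa using B3 x hx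
  refine ⟨?_, ?_, ?_, ?_, ?_, ?_, ?_, ?_⟩
  · intro x hx
    have hB := B x hx
    have h2q : (2*q) ≠ 0 := mul_ne_zero two_ne_zero hq
    field_simp
    linarith [hB]
  · intro x hx
    have h1 := B1' x hx
    have h3 := B3' x hx
    have hob := hodeb x hx
    rw [iteratedDeriv_three x]
    simp only [gfun]
    linear_combination h1 + h3 - 2*q*hob
  · rw [ha0, hc0]; ring
  · rw [haL, hcL]; ring
  · rw [hsub 1 (by norm_num) L memL, haL', hcL']; ring
  · have hBL := B L memL
    have h1 : iteratedDerivWithin 1 (fun ξ => a ξ - c ξ) (Set.Icc 0 L) L = 0 := by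
      rw [hsub 1 (by norm_num) L memL, haL', hcL']; ring
    rw [gminus_L, hbL, h1] at hBL
    linarith [hBL]
  · have hB0 := B 0 mem0
    rw [gminus_zero, hb0] at hB0
    linarith [hB0]
  · have hB1L := B1' L memL
    rw [deriv_gminus_L, hbL'] at hB1L
    linarith [hB1L]
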